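/- Let n > 1, p prime with p ∤ n, 2 ≤ m ≤ n-1, and α(i,j) = i - pj + n⌈(pj-i)/n⌉. For a permutation δ of {0,1,...,m-1}, the following are equivalent: (a) the sum Σ_{i=0}^{m-1} α(i, δ(i)) is minimal among all permutations of {0,...,m-1}; (b) m-1-i ≤ α(m-1, δ(i)) for all 0 ≤ i ≤ m-1; (c) α(i, δ(i)) = i + 1 - m + α(m-1, δ(i)) for all 0 ≤ i ≤ m-1; (d) ⌈(pδ(i)-i)/n⌉ = ⌈(pδ(i)-m+1)/n⌉ for all 0 ≤ i ≤ m-1. -/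

import Mathlib

private lemma ceil_int_div (a b : ℤ) (hb : 0 < b) :
    ⌈((a : ℚ) / (b : ℚ))⌉ = -((-a) / b) := by
  have h1 : ⌈((a : ℚ) / (b : ℚ))⌉ = -⌊-((a : ℚ) / (b : ℚ))⌋ := by
    rw [Int.floor_neg]; ring
  have hb' : ((b.toNat : ℕ) : ℤ) = b := Int.toNat_of_nonneg hb.le
  have hbq : ((b.toNat : ℕ) : ℚ) = (b : ℚ) := by exact_mod_cast hb'
  have h2 : -((a : ℚ) / (b : ℚ)) = ((-a : ℤ) : ℚ) / ((b.toNat : ℕ) : ℚ) := by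
    rw [hbq]; push_cast; ring
  rw [h1, h2, Rat.floor_intCast_div_natCast, hb']

/-- Characterizations of the permutations minimizing `Σ α(i, δ(i))`. -/
theorem minimal_permutation_characterization (n p : ℤ) (hn : 1 < n)
    (hp : Prime p) (hpn : ¬ p ∣ n) (m : ℕ) (hm0 : 2 ≤ m) (hm1 : (m : ℤ) ≤ n - 1)
    (α : ℤ → ℤ → ℤ)
    (hα : ∀ i j : ℤ, α i j = i - p * j + n * ⌈((p * j - i : ℤ) : ℚ) / (n : ℚ)⌉)
    (δ : Equiv.Perm (Fin m)) :
    ((∀ σ : Equiv.Perm (Fin m),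
        (∑ i : Fin m, α ((i : ℕ) : ℤ) ((δ i : ℕ) : ℤ)) ≤
          ∑ i : Fin m, α ((i : ℕ) : ℤ) ((σ i : ℕ) : ℤ)) ↔
      (∀ i : Fin m, (m : ℤ) - 1 - (i : ℕ) ≤ α ((m : ℤ) - 1) ((δ i : ℕ) : ℤ))) ∧
    ((∀ i : Fin m, (m : ℤ) - 1 - (i : ℕ) ≤ α ((m : ℤ) - 1) ((δ i : ℕ) : ℤ)) ↔
      (∀ i : Fin m, α ((i : ℕ) : ℤ) ((δ i : ℕ) : ℤ) =
        ((i : ℕ) : ℤ) + 1 - m + α ((m : ℤ) - 1) ((δ i : ℕ) : ℤ))) ∧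
    ((∀ i : Fin m, α ((i : ℕ) : ℤ) ((δ i : ℕ) : ℤ) =
        ((i : ℕ) : ℤ) + 1 - m + α ((m : ℤ) - 1) ((δ i : ℕ) : ℤ)) ↔
      (∀ i : Fin m,
        ⌈((p * ((δ i : ℕ) : ℤ) - ((i : ℕ) : ℤ) : ℤ) : ℚ) / (n : ℚ)⌉ =
        ⌈((p * ((δ i : ℕ) : ℤ) - (m : ℤ) + 1 : ℤ) : ℚ) / (n : ℚ)⌉)) := by
  have hn0 : (0:ℤ) < n := by linarith
  -- α is the least nonnegative residue of `i - p*j` mod `n`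
  have hα' : ∀ i j : ℤ, α i j = (i - p * j) % n := by
    intro i j
    rw [hα i j, ceil_int_div (p * j - i) n hn0,
      show -(p * j - i) = i - p * j from by ring, Int.emod_def]
    ring
  have hub : ∀ i j : ℤ, 0 ≤ α i j ∧ α i j < n := by
    intro i j; rw [hα']
    exact ⟨Int.emod_nonneg _ hn0.ne', Int.emod_lt_of_pos _ hn0⟩
  -- the split lemma relating α(i,j) and α(m-1,j)
  have hsplit : ∀ (i : Fin m) (j : ℤ),
      α ((m:ℤ)-1) j = α ((i:ℕ):ℤ) j + ((m:ℤ) - 1 - ((i:ℕ):ℤ)) ∨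
      α ((m:ℤ)-1) j = α ((i:ℕ):ℤ) j + ((m:ℤ) - 1 - ((i:ℕ):ℤ)) - n := by
    intro i j
    have hi : ((i:ℕ):ℤ) ≤ (m:ℤ) - 1 := by have := i.isLt; omega
    have hi0 : (0:ℤ) ≤ ((i:ℕ):ℤ) := by positivity
    have hd0 : (0:ℤ) ≤ (m:ℤ) - 1 - ((i:ℕ):ℤ) := by omega
    have hdn : (m:ℤ) - 1 - ((i:ℕ):ℤ) < n := by omega
    have key : α ((m:ℤ)-1) j = ((α ((i:ℕ):ℤ) j) + ((m:ℤ) - 1 - ((i:ℕ):ℤ))) % n := by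
      rw [hα', hα',
        show (m:ℤ) - 1 - p * j = (((i:ℕ):ℤ) - p * j) + ((m:ℤ) - 1 - ((i:ℕ):ℤ)) from by ring,
        Int.add_emod, Int.emod_eq_of_lt hd0 hdn]
    have hx := hub ((i:ℕ):ℤ) j
    rcases lt_or_ge (α ((i:ℕ):ℤ) j + ((m:ℤ) - 1 - ((i:ℕ):ℤ))) n with h | h
    · left
      rw [key, Int.emod_eq_of_lt (by linarith [hx.1]) h]
    · right
      have hb1 : 0 ≤ α ((i:ℕ):ℤ) j + ((m:ℤ) - 1 - ((i:ℕ):ℤ)) - n := by linarith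
      have hb2 : α ((i:ℕ):ℤ) j + ((m:ℤ) - 1 - ((i:ℕ):ℤ)) - n < n := by linarith [hx.2]
      have h3 : (α ((i:ℕ):ℤ) j + ((m:ℤ) - 1 - ((i:ℕ):ℤ))) % n
          = α ((i:ℕ):ℤ) j + ((m:ℤ) - 1 - ((i:ℕ):ℤ)) - n := by
        conv_lhs => rw [show α ((i:ℕ):ℤ) j + ((m:ℤ) - 1 - ((i:ℕ):ℤ))
          = (α ((i:ℕ):ℤ) j + ((m:ℤ) - 1 - ((i:ℕ):ℤ)) - n) + n * 1 from by ring]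
        rw [Int.add_mul_emod_self_left, Int.emod_eq_of_lt hb1 hb2]
      rw [key, h3]
  -- pointwise: (b) ↔ (c)
  have hbc : ∀ (i : Fin m) (j : ℤ),
      ((m:ℤ) - 1 - ((i:ℕ):ℤ) ≤ α ((m:ℤ)-1) j ↔
        α ((i:ℕ):ℤ) j = ((i:ℕ):ℤ) + 1 - (m:ℤ) + α ((m:ℤ)-1) j) := by
    intro i j
    have h1 := hub ((i:ℕ):ℤ) j
    have h2 := hub ((m:ℤ)-1) j
    rcases hsplit i j with h | h
    · constructor
      · intro _; linarith
      · intro _; linarith [h1.1]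
    · constructor
      · intro hb; exfalso; linarith [h1.2]
      · intro hc; exfalso; linarith
  -- pointwise inequality
  have hineq : ∀ (i : Fin m) (j : ℤ),
      α ((m:ℤ)-1) j - ((m:ℤ) - 1 - ((i:ℕ):ℤ)) ≤ α ((i:ℕ):ℤ) j := by
    intro i j
    rcases hsplit i j with h | h
    · linarith
    · linarith
  -- injectivity of j ↦ α(m-1, j) on Fin m
  have hg_inj : Function.Injective (fun j : Fin m => α ((m:ℤ)-1) ((j:ℕ):ℤ)) := by
    intro a b hab
    simp only [hα'] at hab
    have h1 : (((m:ℤ)-1 - p * ((a:ℕ):ℤ)) - ((m:ℤ)-1 - p * ((b:ℕ):ℤ))) % n = 0 :=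
      Int.emod_eq_emod_iff_emod_sub_eq_zero.mp hab
    have h2 : n ∣ p * (((b:ℕ):ℤ) - ((a:ℕ):ℤ)) := by
      have := Int.dvd_of_emod_eq_zero h1
      rwa [show ((m:ℤ)-1 - p * ((a:ℕ):ℤ)) - ((m:ℤ)-1 - p * ((b:ℕ):ℤ))
        = p * (((b:ℕ):ℤ) - ((a:ℕ):ℤ)) from by ring] at this
    have hco : IsCoprime p n := hp.coprime_iff_not_dvd.mpr hpn
    have h3 : n ∣ (((b:ℕ):ℤ) - ((a:ℕ):ℤ)) := hco.symm.dvd_of_dvd_mul_left h2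
    obtain ⟨c, hc⟩ := h3
    have hai : ((a:ℕ):ℤ) < (m:ℤ) := by exact_mod_cast a.isLt
    have hbi : ((b:ℕ):ℤ) < (m:ℤ) := by exact_mod_cast b.isLt
    have ha0 : (0:ℤ) ≤ ((a:ℕ):ℤ) := by positivity
    have hb0 : (0:ℤ) ≤ ((b:ℕ):ℤ) := by positivity
    have hc0 : c = 0 := by
      rcases lt_trichotomy c 0 with h | h | h
      · exfalso
        have : n * c ≤ n * (-1) := mul_le_mul_of_nonneg_left (by omega) hn0.le
        linarith
      · exact h
      · exfalso
        have : n * 1 ≤ n * c := mul_le_mul_of_nonneg_left (by omega) hn0.le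
        linarith
    rw [hc0, mul_zero] at hc
    have : ((a:ℕ):ℤ) = ((b:ℕ):ℤ) := by linarith
    exact Fin.ext (by exact_mod_cast this)
  -- existence of a permutation satisfying (b)
  have exists_good : ∃ τ : Equiv.Perm (Fin m),
      ∀ i : Fin m, (m:ℤ) - 1 - ((i:ℕ):ℤ) ≤ α ((m:ℤ)-1) ((τ i : ℕ):ℤ) := by
    classical
    set g : Fin m → ℤ := fun j => -(α ((m:ℤ)-1) ((j:ℕ):ℤ)) with hg
    refine ⟨Tuple.sort g, ?_⟩
    have hmono := Tuple.monotone_sort g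
    have hinj : Function.Injective (g ∘ (Tuple.sort g)) := by
      apply Function.Injective.comp ?_ (Tuple.sort g).injective
      intro a b hab
      simp only [hg] at hab
      exact hg_inj (neg_injective hab)
    have hsmono := hmono.strictMono_of_injective hinj
    obtain ⟨m', hm'⟩ : ∃ m', m = m' + 1 := ⟨m - 1, by omega⟩
    subst hm'
    intro i
    induction i using Fin.reverseInduction with
    | last =>
      have h0 := (hub (((m' + 1 : ℕ):ℤ) - 1) ((Tuple.sort g (Fin.last m') : ℕ):ℤ)).1
      simp only [Fin.val_last]
      push_cast at h0 ⊢
      linarith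
    | cast i ih =>
      have hgv : ∀ j, g j = -(α (((m' + 1 : ℕ):ℤ)-1) ((j:ℕ):ℤ)) := fun j => rfl
      have hlt := hsmono (Fin.castSucc_lt_succ (i := i))
      simp only [Function.comp_apply, hgv] at hlt
      simp only [Fin.val_succ] at ih
      simp only [Fin.coe_castSucc]
      push_cast at ih hlt ⊢
      linarith
  -- constant value of the lower-bound sum
  have hconst : ∀ σ : Equiv.Perm (Fin m),
      ∑ i : Fin m, (α ((m:ℤ)-1) ((σ i : ℕ):ℤ) - ((m:ℤ) - 1 - ((i:ℕ):ℤ)))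
        = (∑ i : Fin m, α ((m:ℤ)-1) ((i:ℕ):ℤ)) - ∑ i : Fin m, ((m:ℤ) - 1 - ((i:ℕ):ℤ)) := by
    intro σ
    rw [Finset.sum_sub_distrib]
    congr 1
    exact Equiv.sum_comp σ (fun i => α ((m:ℤ)-1) ((i:ℕ):ℤ))
  have hlow : ∀ σ : Equiv.Perm (Fin m),
      (∑ i : Fin m, α ((m:ℤ)-1) ((i:ℕ):ℤ)) - ∑ i : Fin m, ((m:ℤ) - 1 - ((i:ℕ):ℤ))
        ≤ ∑ i : Fin m, α ((i:ℕ):ℤ) ((σ i : ℕ):ℤ) := by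
    intro σ
    rw [← hconst σ]
    exact Finset.sum_le_sum (fun i _ => hineq i _)
  have hexact : ∀ σ : Equiv.Perm (Fin m),
      (∀ i : Fin m, (m:ℤ) - 1 - ((i:ℕ):ℤ) ≤ α ((m:ℤ)-1) ((σ i : ℕ):ℤ)) →
      ∑ i : Fin m, α ((i:ℕ):ℤ) ((σ i : ℕ):ℤ)
        = (∑ i : Fin m, α ((m:ℤ)-1) ((i:ℕ):ℤ)) - ∑ i : Fin m, ((m:ℤ) - 1 - ((i:ℕ):ℤ)) := by
    intro σ hσ
    rw [← hconst σ]
    apply Finset.sum_congr rfl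
    intro i _
    have h := (hbc i _).mp (hσ i)
    linarith
  refine ⟨?_, ?_, ?_⟩
  · -- (a) ↔ (b)
    obtain ⟨τ, hτ⟩ := exists_good
    constructor
    · intro ha i
      have hle := ha τ
      rw [hexact τ hτ] at hle
      have heq : ∑ i : Fin m, (α ((m:ℤ)-1) ((δ i : ℕ):ℤ) - ((m:ℤ) - 1 - ((i:ℕ):ℤ)))
          = ∑ i : Fin m, α ((i:ℕ):ℤ) ((δ i : ℕ):ℤ) := by
        refine le_antisymm (Finset.sum_le_sum fun i _ => hineq i _) ?_
        rw [hconst δ]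
        exact hle
      have hterm := (Finset.sum_eq_sum_iff_of_le (fun i _ => hineq i _)).mp heq i
        (Finset.mem_univ i)
      exact (hbc i _).mpr (by linarith)
    · intro hb σ
      rw [hexact δ hb]
      exact hlow σ
  · -- (b) ↔ (c)
    constructor
    · intro h i; exact (hbc i _).mp (h i)
    · intro h i; exact (hbc i _).mpr (h i)
  · -- (c) ↔ (d)
    have harg : ∀ i : Fin m, (p * ((δ i : ℕ):ℤ) - (m:ℤ) + 1) = p * ((δ i : ℕ):ℤ) - ((m:ℤ) - 1) :=
      fun i => by ring
    constructor
    · intro hc i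
      have h1 := hα ((i:ℕ):ℤ) ((δ i : ℕ):ℤ)
      have h2 := hα ((m:ℤ)-1) ((δ i : ℕ):ℤ)
      have hc' := hc i
      rw [h1, h2] at hc'
      have hC : n * ⌈((p * ((δ i : ℕ):ℤ) - ((i:ℕ):ℤ) : ℤ):ℚ) / (n:ℚ)⌉
          = n * ⌈((p * ((δ i : ℕ):ℤ) - ((m:ℤ) - 1) : ℤ):ℚ) / (n:ℚ)⌉ := by linarith
      rw [harg i]
      exact mul_left_cancel₀ hn0.ne' hC
    · intro hd i
      have h := hd i
      rw [harg i] at h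
      rw [hα ((i:ℕ):ℤ) ((δ i : ℕ):ℤ), hα ((m:ℤ)-1) ((δ i : ℕ):ℤ), h]
      ring
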